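/- Let α ∈ ℝ, β < 1/2, and define for t ≥ s and (p₀, q₀) with p₀² ≤ q₀, q₀ ≥ 0: Q(t) = e^{(2α+1)(t−s)}·(q₀ + (2β/(1−2β))·(1 − e^{(2β−1)(t−s)})·p₀²). Then: (i) Q(t) ≤ e^{(2α+1)(t−s)}·(1 + 2|β|/(1−2β))·q₀; (ii) if β ≥ 0 then Q(t) ≥ e^{(2α+1)(t−s)}·q₀, and if β < 0 then Q(t) ≥ (1/(1−2β))·e^{(2α+1)(t−s)}·q₀. -/

import Mathlib

theorem dichotomy_bounds_beta_lt_half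
    (α β s p₀ q₀ : ℝ) (hβ : β < 1 / 2) (hpq : p₀ ^ 2 ≤ q₀) (hq₀ : 0 ≤ q₀)
    (Q : ℝ → ℝ)
    (hQ : ∀ t, s ≤ t → Q t = Real.exp ((2 * α + 1) * (t - s)) *
      (q₀ + (2 * β / (1 - 2 * β)) * (1 - Real.exp ((2 * β - 1) * (t - s))) * p₀ ^ 2)) :
    (∀ t, s ≤ t →
      Q t ≤ Real.exp ((2 * α + 1) * (t - s)) * (1 + 2 * |β| / (1 - 2 * β)) * q₀) ∧
    (0 ≤ β → ∀ t, s ≤ t → Q t ≥ Real.exp ((2 * α + 1) * (t - s)) * q₀) ∧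
    (β < 0 → ∀ t, s ≤ t →
      Q t ≥ (1 / (1 - 2 * β)) * Real.exp ((2 * α + 1) * (t - s)) * q₀) := by
  have hd : 0 < 1 - 2 * β := by linarith
  have hp2 : 0 ≤ p₀ ^ 2 := sq_nonneg _
  refine ⟨?_, ?_, ?_⟩
  · intro t ht
    rw [hQ t ht]
    set E := Real.exp ((2 * β - 1) * (t - s)) with hEdef
    have hE0 : 0 < E := Real.exp_pos _
    have hE1 : E ≤ 1 := by
      rw [hEdef, Real.exp_le_one_iff]
      nlinarith
    have hexp : (0:ℝ) < Real.exp ((2 * α + 1) * (t - s)) := Real.exp_pos _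
    have h1 : (1 - E) * p₀ ^ 2 ≤ q₀ := by nlinarith [mul_nonneg hE0.le hp2]
    have key : q₀ + 2 * β / (1 - 2 * β) * (1 - E) * p₀ ^ 2
        ≤ (1 + 2 * |β| / (1 - 2 * β)) * q₀ := by
      rcases le_or_gt 0 β with hb | hb
      · rw [abs_of_nonneg hb]
        have hc : 0 ≤ 2 * β / (1 - 2 * β) := div_nonneg (by linarith) hd.le
        nlinarith [mul_le_mul_of_nonneg_left h1 hc]
      · rw [abs_of_neg hb]
        have hc : 2 * β / (1 - 2 * β) ≤ 0 :=
          div_nonpos_of_nonpos_of_nonneg (by linarith) hd.le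
        have hc' : 0 ≤ 2 * -β / (1 - 2 * β) := div_nonneg (by linarith) hd.le
        nlinarith [mul_nonneg (mul_nonneg (neg_nonneg.mpr hc) (by linarith : (0:ℝ) ≤ 1 - E)) hp2,
          mul_nonneg hc' hq₀]
    nlinarith [mul_le_mul_of_nonneg_left key hexp.le]
  · intro hb t ht
    rw [hQ t ht]
    set E := Real.exp ((2 * β - 1) * (t - s)) with hEdef
    have hE0 : 0 < E := Real.exp_pos _
    have hE1 : E ≤ 1 := by
      rw [hEdef, Real.exp_le_one_iff]
      nlinarith
    have hexp : (0:ℝ) < Real.exp ((2 * α + 1) * (t - s)) := Real.exp_pos _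
    have hc : 0 ≤ 2 * β / (1 - 2 * β) := div_nonneg (by linarith) hd.le
    have key : q₀ ≤ q₀ + 2 * β / (1 - 2 * β) * (1 - E) * p₀ ^ 2 := by
      nlinarith [mul_nonneg (mul_nonneg hc (by linarith : (0:ℝ) ≤ 1 - E)) hp2]
    nlinarith [mul_le_mul_of_nonneg_left key hexp.le]
  · intro hb t ht
    rw [hQ t ht]
    set E := Real.exp ((2 * β - 1) * (t - s)) with hEdef
    have hE0 : 0 < E := Real.exp_pos _
    have hE1 : E ≤ 1 := by
      rw [hEdef, Real.exp_le_one_iff]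
      nlinarith
    have hexp : (0:ℝ) < Real.exp ((2 * α + 1) * (t - s)) := Real.exp_pos _
    have hc : 2 * β / (1 - 2 * β) ≤ 0 :=
      div_nonpos_of_nonpos_of_nonneg (by linarith) hd.le
    have h1 : (1 - E) * p₀ ^ 2 ≤ q₀ := by nlinarith [mul_nonneg hE0.le hp2]
    have hsum : 1 / (1 - 2 * β) = 1 + 2 * β / (1 - 2 * β) := by
      field_simp
      ring
    have h2 : 2 * β / (1 - 2 * β) * q₀ ≤ 2 * β / (1 - 2 * β) * ((1 - E) * p₀ ^ 2) :=
      mul_le_mul_of_nonpos_left h1 hc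
    have key : 1 / (1 - 2 * β) * q₀ ≤ q₀ + 2 * β / (1 - 2 * β) * (1 - E) * p₀ ^ 2 := by
      rw [hsum]
      nlinarith [h2]
    nlinarith [mul_le_mul_of_nonneg_left key hexp.le]
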